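/- Let n ≥ 4 and define ψ_n(α) = (1/(2^{n-2} Γ(n/2)²)) ∫₀¹ (1-t²)^{(n-2)/2} [∫₀^∞∫₀^∞ exp(-(r² + r'² - 2rr't α)/2) (rr')^{n-2} dr dr'] dt. Then there exist constants 0 < a ≤ b, depending only on n, such that a · (1-α)^{-(n-3)/2} ≤ ψ_n(α) ≤ b · (1-α)^{-(n-3)/2} for all α ∈ [-1, 1). -/

import Mathlib

open MeasureTheory Real

/-- The mixing density `ψ_n(α)`. -/
noncomputable def psi (n : ℕ) (α : ℝ) : ℝ :=
  (1 / (2 ^ ((n : ℝ) - 2) * Real.Gamma ((n : ℝ) / 2) ^ 2)) *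
    ∫ t in Set.Ioo (0 : ℝ) 1,
      (1 - t ^ 2) ^ (((n : ℝ) - 2) / 2) *
        ∫ r in Set.Ioi (0 : ℝ), ∫ r' in Set.Ioi (0 : ℝ),
          Real.exp (-(r ^ 2 + r' ^ 2 - 2 * r * r' * t * α) / 2) * (r * r') ^ ((n : ℝ) - 2)

namespace S7


noncomputable def inn (p c : ℝ) : ℝ :=
  ∫ r in Set.Ioi (0:ℝ), ∫ r' in Set.Ioi (0:ℝ),
    Real.exp (-(r ^ 2 + r' ^ 2 - 2 * r * r' * c) / 2) * (r * r') ^ p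

noncomputable def f0 (p : ℝ) : (ℝ × ℝ) × ℝ → ℝ := fun z =>
  Real.exp (-(z.1.2 ^ 2 + z.2 ^ 2 - 2 * z.1.2 * z.2 * z.1.1) / 2) * (z.1.2 * z.2) ^ p

lemma meas_f (p : ℝ) : Measurable (f0 p) := by
  unfold f0; fun_prop

lemma sm_G (p : ℝ) : StronglyMeasurable (fun q : ℝ × ℝ =>
    ∫ y, f0 p (q, y) ∂(volume.restrict (Set.Ioi (0:ℝ)))) :=
  (meas_f p).stronglyMeasurable.integral_prod_right'

lemma sm_F (p c : ℝ) : StronglyMeasurable (fun r : ℝ =>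
    ∫ r' in Set.Ioi (0:ℝ),
      Real.exp (-(r ^ 2 + r' ^ 2 - 2 * r * r' * c) / 2) * (r * r') ^ p) := by
  have := (sm_G p).comp_measurable ((measurable_const (a := c)).prodMk measurable_id)
  simpa [f0, Function.comp_def] using this

lemma sm_T (p α : ℝ) : StronglyMeasurable (fun t : ℝ => inn p (t * α)) := by
  have h1 : StronglyMeasurable (fun w : ℝ × ℝ =>
      ∫ y, f0 p ((w.1 * α, w.2), y) ∂(volume.restrict (Set.Ioi (0:ℝ)))) :=
    (sm_G p).comp_measurable ((measurable_fst.mul_const α).prodMk measurable_snd)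
  have h2 : StronglyMeasurable (fun t : ℝ =>
      ∫ r, (fun w : ℝ × ℝ =>
        ∫ y, f0 p ((w.1 * α, w.2), y) ∂(volume.restrict (Set.Ioi (0:ℝ)))) (t, r)
        ∂(volume.restrict (Set.Ioi (0:ℝ)))) := h1.integral_prod_right'
  simpa [inn, f0] using h2



lemma rpow_neg_anti {x y s : ℝ} (hx : 0 < x) (hxy : x ≤ y) (hs : 0 ≤ s) :
    y ^ (-s) ≤ x ^ (-s) := by
  rw [Real.rpow_neg hx.le, Real.rpow_neg (hx.trans_le hxy).le]
  exact inv_anti₀ (Real.rpow_pos_of_pos hx s) (Real.rpow_le_rpow hx.le hxy hs)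

lemma key_pow {k : ℕ} {ε x : ℝ} (hε : 0 < ε) (hx : 0 < x) :
    x ^ k * Real.exp (-(ε * x) / 2) ≤ (2 / ε) ^ k * k.factorial := by
  set y := ε * x / 2 with hy
  have hy0 : (0:ℝ) ≤ y := by positivity
  have h1 : y ^ k ≤ (k.factorial : ℝ) * Real.exp y := by
    have h := Real.pow_div_factorial_le_exp (x := y) hy0 k
    rw [div_le_iff₀ (by positivity : (0:ℝ) < (k.factorial:ℝ))] at h
    linarith
  have h2 : x ^ k = (2 / ε) ^ k * y ^ k := by
    rw [← mul_pow]; congr 1; field_simp; ring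
  have h3 : Real.exp (-(ε * x) / 2) = Real.exp (-y) := by rw [hy]; ring_nf
  rw [h2, h3]
  calc (2 / ε) ^ k * y ^ k * Real.exp (-y)
      ≤ (2 / ε) ^ k * ((k.factorial : ℝ) * Real.exp y) * Real.exp (-y) := by
        have h4 : (0:ℝ) ≤ (2/ε)^k := by positivity
        have h5 : (0:ℝ) < Real.exp (-y) := Real.exp_pos _
        exact mul_le_mul_of_nonneg_right (mul_le_mul_of_nonneg_left h1 h4) h5.le
    _ = (2 / ε) ^ k * k.factorial := by
        rw [mul_assoc, mul_assoc, ← Real.exp_add]; simp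

lemma ptw_ub {k : ℕ} {ε r r' : ℝ} (hε : 0 < ε) (hr : 0 < r) (hr' : 0 < r') :
    Real.exp (-(r ^ 2 + r' ^ 2 - 2 * r * r' * (1 - ε)) / 2) * (r * r') ^ k ≤
      (2 / ε) ^ k * k.factorial *
        (Real.exp (-(r - r') ^ 2 / 2) * Real.exp (-(ε * (r * r')) / 2)) := by
  have hx : (0:ℝ) < r * r' := mul_pos hr hr'
  have hsplit : -(r ^ 2 + r' ^ 2 - 2 * r * r' * (1 - ε)) / 2
      = (-(r - r') ^ 2 / 2 + -(ε * (r * r')) / 2) + -(ε * (r * r')) / 2 := by ring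
  rw [hsplit, Real.exp_add, Real.exp_add]
  have key := key_pow (k := k) hε hx
  have hE1 : (0:ℝ) < Real.exp (-(r - r') ^ 2 / 2) := Real.exp_pos _
  have hE2 : (0:ℝ) < Real.exp (-(ε * (r * r')) / 2) := Real.exp_pos _
  nlinarith [mul_le_mul_of_nonneg_left key
    (by positivity : (0:ℝ) ≤ Real.exp (-(r - r') ^ 2 / 2) * Real.exp (-(ε * (r * r')) / 2))]

-- completing the square
lemma csq (ε r r' : ℝ) :
    Real.exp (-(r - r') ^ 2 / 2) * Real.exp (-(ε * (r * r')) / 2)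
      = Real.exp ((r * (1 - ε / 2)) ^ 2 / 2 - r ^ 2 / 2) *
          Real.exp (-(1 / 2) * (r' - r * (1 - ε / 2)) ^ 2) := by
  rw [← Real.exp_add, ← Real.exp_add]; congr 1; ring

lemma gauss_comp_integrable (a B : ℝ) :
    Integrable (fun x : ℝ => B * Real.exp (-(1 / 2) * (x - a) ^ 2)) volume := by
  exact ((integrable_exp_neg_mul_sq (by norm_num : (0:ℝ) < 1/2)).comp_sub_right a).const_mul B

lemma gauss_comp_integral (a : ℝ) :
    (∫ x : ℝ, Real.exp (-(1 / 2) * (x - a) ^ 2)) = Real.sqrt (2 * π) := by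
  rw [integral_sub_right_eq_self (fun x => Real.exp (-(1/2) * x ^ 2)) a]
  rw [integral_gaussian, show π / (1/2) = 2 * π by ring]


section
variable {k : ℕ} {ε : ℝ}

lemma ptw_ub' {r r' : ℝ} (hε : 0 < ε) (hr : 0 < r) (hr' : 0 < r') :
    Real.exp (-(r ^ 2 + r' ^ 2 - 2 * r * r' * (1 - ε)) / 2) * (r * r') ^ ((k:ℕ):ℝ) ≤
      (2 / ε) ^ k * k.factorial *
        (Real.exp (-(r - r') ^ 2 / 2) * Real.exp (-(ε * (r * r')) / 2)) := by
  rw [Real.rpow_natCast]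
  exact ptw_ub hε hr hr'

lemma inner_nonneg (p c : ℝ) {r : ℝ} (hr : 0 ≤ r) :
    0 ≤ ∫ r' in Set.Ioi (0:ℝ),
      Real.exp (-(r ^ 2 + r' ^ 2 - 2 * r * r' * c) / 2) * (r * r') ^ p :=
  setIntegral_nonneg measurableSet_Ioi fun r' hr' =>
    mul_nonneg (Real.exp_pos _).le (Real.rpow_nonneg (mul_nonneg hr hr'.le) _)

lemma inner_ub (hε : 0 < ε) (hε2 : ε ≤ 2) {r : ℝ} (hr : 0 < r) :
    (∫ r' in Set.Ioi (0:ℝ),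
      Real.exp (-(r ^ 2 + r' ^ 2 - 2 * r * r' * (1 - ε)) / 2) * (r * r') ^ ((k:ℕ):ℝ)) ≤
    (2 / ε) ^ k * k.factorial * Real.sqrt (2 * π) * Real.exp (-(ε / 4) * r ^ 2) := by
  set a := r * (1 - ε / 2) with ha
  set C := ((2 / ε) ^ k * (k.factorial : ℝ)) with hC
  set B := C * Real.exp (a ^ 2 / 2 - r ^ 2 / 2) with hB
  have hC0 : 0 ≤ C := by positivity
  have hB0 : 0 ≤ B := by positivity
  have hmono : (∫ r' in Set.Ioi (0:ℝ),
      Real.exp (-(r ^ 2 + r' ^ 2 - 2 * r * r' * (1 - ε)) / 2) * (r * r') ^ ((k:ℕ):ℝ)) ≤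
      ∫ r' in Set.Ioi (0:ℝ), B * Real.exp (-(1 / 2) * (r' - a) ^ 2) := by
    refine integral_mono_of_nonneg ?_ ((gauss_comp_integrable a B).integrableOn) ?_
    · filter_upwards [ae_restrict_mem measurableSet_Ioi] with r' hr'
      exact mul_nonneg (Real.exp_pos _).le (Real.rpow_nonneg (mul_nonneg hr.le hr'.le) _)
    · filter_upwards [ae_restrict_mem measurableSet_Ioi] with r' hr'
      calc Real.exp (-(r ^ 2 + r' ^ 2 - 2 * r * r' * (1 - ε)) / 2) * (r * r') ^ ((k:ℕ):ℝ)
          ≤ (2 / ε) ^ k * k.factorial *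
            (Real.exp (-(r - r') ^ 2 / 2) * Real.exp (-(ε * (r * r')) / 2)) :=
            ptw_ub' hε hr hr'
        _ = B * Real.exp (-(1 / 2) * (r' - a) ^ 2) := by
            rw [csq ε r r', hB, hC]; ring
  have h2 : (∫ r' in Set.Ioi (0:ℝ), B * Real.exp (-(1 / 2) * (r' - a) ^ 2)) ≤
      ∫ r' : ℝ, B * Real.exp (-(1 / 2) * (r' - a) ^ 2) :=
    setIntegral_le_integral (gauss_comp_integrable a B)
      (Filter.Eventually.of_forall fun x => by positivity)
  have h3 : (∫ r' : ℝ, B * Real.exp (-(1 / 2) * (r' - a) ^ 2)) = B * Real.sqrt (2 * π) := by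
    rw [integral_const_mul, gauss_comp_integral]
  have h4 : Real.exp (a ^ 2 / 2 - r ^ 2 / 2) ≤ Real.exp (-(ε / 4) * r ^ 2) := by
    apply Real.exp_le_exp.2
    have h5 : 0 ≤ r ^ 2 * (ε * (2 - ε)) :=
      mul_nonneg (sq_nonneg r) (mul_nonneg hε.le (by linarith))
    rw [ha]; nlinarith
  calc (∫ r' in Set.Ioi (0:ℝ),
      Real.exp (-(r ^ 2 + r' ^ 2 - 2 * r * r' * (1 - ε)) / 2) * (r * r') ^ ((k:ℕ):ℝ))
      ≤ B * Real.sqrt (2 * π) := by rw [← h3]; exact hmono.trans h2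
    _ ≤ (C * Real.exp (-(ε / 4) * r ^ 2)) * Real.sqrt (2 * π) := by
        rw [hB]
        have := mul_le_mul_of_nonneg_left h4 hC0
        exact mul_le_mul_of_nonneg_right this (Real.sqrt_nonneg _)
    _ = (2 / ε) ^ k * k.factorial * Real.sqrt (2 * π) * Real.exp (-(ε / 4) * r ^ 2) := by
        rw [hC]; ring

end


variable {k : ℕ} {ε : ℝ}

lemma G_int (hε : 0 < ε) :
    Integrable (fun r : ℝ => (2 / ε) ^ k * k.factorial * Real.sqrt (2 * π) *
      Real.exp (-(ε / 4) * r ^ 2)) volume :=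
  (integrable_exp_neg_mul_sq (by positivity)).const_mul _

lemma F_intOn (hε : 0 < ε) (hε2 : ε ≤ 2) :
    IntegrableOn (fun r : ℝ => ∫ r' in Set.Ioi (0:ℝ),
      Real.exp (-(r ^ 2 + r' ^ 2 - 2 * r * r' * (1 - ε)) / 2) * (r * r') ^ ((k:ℕ):ℝ))
      (Set.Ioi 0) volume := by
  refine Integrable.mono' ((G_int (k := k) hε).integrableOn) ((sm_F _ _).aestronglyMeasurable) ?_
  filter_upwards [ae_restrict_mem measurableSet_Ioi] with r hr
  rw [Real.norm_eq_abs, abs_of_nonneg (inner_nonneg _ _ hr.le)]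
  exact inner_ub hε hε2 hr

noncomputable def c2up (k : ℕ) : ℝ :=
  2 ^ k * k.factorial * Real.sqrt (2 * π) * (Real.sqrt (4 * π) / 2)

lemma c2up_pos (k : ℕ) : 0 < c2up k := by
  unfold c2up; positivity

lemma eps_rpow (k : ℕ) (hε : 0 < ε) :
    ε ^ (-((k:ℝ) + 1 / 2)) = (ε ^ (k:ℕ) * Real.sqrt ε)⁻¹ := by
  rw [Real.rpow_neg hε.le, Real.rpow_add hε, Real.rpow_natCast, ← Real.sqrt_eq_rpow]

lemma inn_ub' (hε : 0 < ε) (hε2 : ε ≤ 2) :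
    inn ((k:ℕ):ℝ) (1 - ε) ≤ c2up k * ε ^ (-((k:ℝ) + 1 / 2)) := by
  have hmono : inn ((k:ℕ):ℝ) (1 - ε) ≤ ∫ r in Set.Ioi (0:ℝ),
      (2 / ε) ^ k * k.factorial * Real.sqrt (2 * π) * Real.exp (-(ε / 4) * r ^ 2) := by
    unfold inn
    refine integral_mono_of_nonneg ?_ ((G_int hε).integrableOn) ?_
    · filter_upwards [ae_restrict_mem measurableSet_Ioi] with r hr
      exact inner_nonneg _ _ hr.le
    · filter_upwards [ae_restrict_mem measurableSet_Ioi] with r hr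
      exact inner_ub hε hε2 hr
  have hval : (∫ r in Set.Ioi (0:ℝ),
      (2 / ε) ^ k * k.factorial * Real.sqrt (2 * π) * Real.exp (-(ε / 4) * r ^ 2))
      = (2 / ε) ^ k * k.factorial * Real.sqrt (2 * π) * (Real.sqrt (π / (ε / 4)) / 2) := by
    rw [integral_const_mul, integral_gaussian_Ioi]
  refine hmono.trans ?_
  rw [hval]
  have hsε : 0 < Real.sqrt ε := Real.sqrt_pos.2 hε
  have h1 : Real.sqrt (π / (ε / 4)) = Real.sqrt (4 * π) / Real.sqrt ε := by
    rw [show π / (ε / 4) = 4 * π / ε by ring, Real.sqrt_div (by positivity) ε]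
  rw [h1, eps_rpow k hε, div_pow, c2up]
  rw [le_iff_lt_or_eq]; right
  field_simp




variable {k : ℕ} {ε : ℝ}

lemma esplit (ε r r' : ℝ) :
    Real.exp (-(r ^ 2 + r' ^ 2 - 2 * r * r' * (1 - ε)) / 2)
      = Real.exp (-(r - r') ^ 2 / 2) * Real.exp (-(ε * (r * r'))) := by
  rw [← Real.exp_add]; congr 1; ring

lemma f_r_intOn (hε : 0 < ε) {r : ℝ} (hr : 0 < r) :
    IntegrableOn (fun r' : ℝ =>
      Real.exp (-(r ^ 2 + r' ^ 2 - 2 * r * r' * (1 - ε)) / 2) * (r * r') ^ ((k:ℕ):ℝ))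
      (Set.Ioi 0) volume := by
  refine Integrable.mono'
    ((gauss_comp_integrable (r * (1 - ε / 2))
      ((2 / ε) ^ k * k.factorial * Real.exp ((r * (1 - ε / 2)) ^ 2 / 2 - r ^ 2 / 2))).integrableOn)
    ((by fun_prop : Measurable fun r' : ℝ =>
      Real.exp (-(r ^ 2 + r' ^ 2 - 2 * r * r' * (1 - ε)) / 2) * (r * r') ^ ((k:ℕ):ℝ)).aestronglyMeasurable)
    ?_
  filter_upwards [ae_restrict_mem measurableSet_Ioi] with r' hr'
  rw [Real.norm_eq_abs, abs_of_nonneg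
    (mul_nonneg (Real.exp_pos _).le (Real.rpow_nonneg (mul_nonneg hr.le hr'.le) _))]
  calc Real.exp (-(r ^ 2 + r' ^ 2 - 2 * r * r' * (1 - ε)) / 2) * (r * r') ^ ((k:ℕ):ℝ)
      ≤ (2 / ε) ^ k * k.factorial *
        (Real.exp (-(r - r') ^ 2 / 2) * Real.exp (-(ε * (r * r')) / 2)) := ptw_ub' hε hr hr'
    _ = (2 / ε) ^ k * k.factorial * Real.exp ((r * (1 - ε / 2)) ^ 2 / 2 - r ^ 2 / 2) *
        Real.exp (-(1 / 2) * (r' - r * (1 - ε / 2)) ^ 2) := by rw [csq ε r r']; ring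

lemma inn_lb' (hε : 0 < ε) (hε2 : ε ≤ 2) :
    Real.exp (-17 / 2) * ε ^ (-((k:ℝ) + 1 / 2)) ≤ inn ((k:ℕ):ℝ) (1 - ε) := by
  set s := Real.sqrt ε with hs
  have hs0 : 0 < s := Real.sqrt_pos.2 hε
  have hsq : s ^ 2 = ε := Real.sq_sqrt hε.le
  have hs2 : s ≤ 2 := by nlinarith
  -- pointwise bound on the box
  have hptw : ∀ r ∈ Set.Ioo (1 / s) (2 / s), ∀ r' ∈ Set.Ioo r (r + 1),
      Real.exp (-17 / 2) * (ε ^ k)⁻¹ ≤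
        Real.exp (-(r ^ 2 + r' ^ 2 - 2 * r * r' * (1 - ε)) / 2) * (r * r') ^ ((k:ℕ):ℝ) := by
    intro r hr r' hr'
    have h0r : 0 < r := lt_trans (by positivity) hr.1
    have h0r' : 0 < r' := h0r.trans hr'.1
    rw [Real.rpow_natCast, esplit]
    have hrs : r * s < 2 := (lt_div_iff₀ hs0).1 hr.2
    have hrs1 : 1 < r * s := (div_lt_iff₀ hs0).1 hr.1
    have e1 : Real.exp (-(1:ℝ) / 2) ≤ Real.exp (-(r - r') ^ 2 / 2) := by
      apply Real.exp_le_exp.2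
      nlinarith [hr'.1, hr'.2]
    have e2 : Real.exp (-(8:ℝ)) ≤ Real.exp (-(ε * (r * r'))) := by
      apply Real.exp_le_exp.2
      have h1 : r' * s < r * s + s := by nlinarith [hr'.2]
      have h2 : ε * (r * r') = (r * s) * (r' * s) := by rw [← hsq]; ring
      nlinarith [mul_pos h0r' hs0]
    have e3 : (ε ^ k)⁻¹ ≤ (r * r') ^ k := by
      rw [← inv_pow]
      refine pow_le_pow_left₀ (by positivity) ?_ k
      have h3 : 1 / ε < r ^ 2 := by
        rw [← hsq]; rw [div_lt_iff₀ (by positivity)]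
        nlinarith
      have h4 : r ^ 2 ≤ r * r' := by nlinarith [hr'.1]
      rw [inv_eq_one_div]
      linarith
    have hexp : Real.exp (-17 / 2 : ℝ) = Real.exp (-(1:ℝ) / 2) * Real.exp (-(8:ℝ)) := by
      rw [← Real.exp_add]; norm_num
    rw [hexp]
    exact mul_le_mul (mul_le_mul e1 e2 (Real.exp_pos _).le (Real.exp_pos _).le) e3
      (by positivity) (by positivity)
  -- inner step: F r ≥ m0 on the box
  have hF : ∀ r ∈ Set.Ioo (1 / s) (2 / s),
      Real.exp (-17 / 2) * (ε ^ k)⁻¹ ≤ ∫ r' in Set.Ioi (0:ℝ),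
        Real.exp (-(r ^ 2 + r' ^ 2 - 2 * r * r' * (1 - ε)) / 2) * (r * r') ^ ((k:ℕ):ℝ) := by
    intro r hr
    have h0r : 0 < r := lt_trans (by positivity) hr.1
    have hsub : Set.Ioo r (r + 1) ⊆ Set.Ioi (0:ℝ) := fun x hx => h0r.trans hx.1
    have hstep1 : (∫ r' in Set.Ioo r (r + 1),
        Real.exp (-(r ^ 2 + r' ^ 2 - 2 * r * r' * (1 - ε)) / 2) * (r * r') ^ ((k:ℕ):ℝ)) ≤
        ∫ r' in Set.Ioi (0:ℝ),
        Real.exp (-(r ^ 2 + r' ^ 2 - 2 * r * r' * (1 - ε)) / 2) * (r * r') ^ ((k:ℕ):ℝ) := by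
      refine setIntegral_mono_set (f_r_intOn hε h0r) ?_ hsub.eventuallyLE
      filter_upwards [ae_restrict_mem measurableSet_Ioi] with r' hr'
      exact mul_nonneg (Real.exp_pos _).le (Real.rpow_nonneg (mul_nonneg h0r.le hr'.le) _)
    have hstep2 : Real.exp (-17 / 2) * (ε ^ k)⁻¹ ≤ ∫ r' in Set.Ioo r (r + 1),
        Real.exp (-(r ^ 2 + r' ^ 2 - 2 * r * r' * (1 - ε)) / 2) * (r * r') ^ ((k:ℕ):ℝ) := by
      have hc := setIntegral_mono_on (integrableOn_const (ne_of_lt (by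
          rw [Real.volume_Ioo]; exact ENNReal.ofReal_lt_top)))
        ((f_r_intOn hε h0r).mono_set hsub) measurableSet_Ioo (hptw r hr)
      rw [setIntegral_const, measureReal_def, Real.volume_Ioo] at hc
      simpa using hc
    exact hstep2.trans hstep1
  -- outer step
  have hsub2 : Set.Ioo (1 / s) (2 / s) ⊆ Set.Ioi (0:ℝ) := fun x hx => lt_trans (by positivity) hx.1
  have hstep3 : (∫ r in Set.Ioo (1 / s) (2 / s), (fun r : ℝ => ∫ r' in Set.Ioi (0:ℝ),
      Real.exp (-(r ^ 2 + r' ^ 2 - 2 * r * r' * (1 - ε)) / 2) * (r * r') ^ ((k:ℕ):ℝ)) r) ≤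
      inn ((k:ℕ):ℝ) (1 - ε) := by
    unfold inn
    refine setIntegral_mono_set (F_intOn hε hε2) ?_ hsub2.eventuallyLE
    filter_upwards [ae_restrict_mem measurableSet_Ioi] with r hr
    exact inner_nonneg _ _ hr.le
  have hstep4 : (Real.exp (-17 / 2) * (ε ^ k)⁻¹) * (1 / s) ≤
      ∫ r in Set.Ioo (1 / s) (2 / s), (fun r : ℝ => ∫ r' in Set.Ioi (0:ℝ),
      Real.exp (-(r ^ 2 + r' ^ 2 - 2 * r * r' * (1 - ε)) / 2) * (r * r') ^ ((k:ℕ):ℝ)) r := by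
    have hc := setIntegral_mono_on (integrableOn_const (ne_of_lt (by
        rw [Real.volume_Ioo]; exact ENNReal.ofReal_lt_top)))
      ((F_intOn hε hε2).mono_set hsub2) measurableSet_Ioo hF
    rw [setIntegral_const, measureReal_def, Real.volume_Ioo] at hc
    have hlen : (2 : ℝ) / s - 1 / s = 1 / s := by ring
    rw [hlen] at hc
    rw [ENNReal.toReal_ofReal (by positivity)] at hc
    calc (Real.exp (-17 / 2) * (ε ^ k)⁻¹) * (1 / s)
        = (1 / s) • (Real.exp (-17 / 2) * (ε ^ k)⁻¹) := by rw [smul_eq_mul]; ring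
      _ ≤ _ := hc
  have halg : Real.exp (-17 / 2) * ε ^ (-((k:ℝ) + 1 / 2))
      = (Real.exp (-17 / 2) * (ε ^ k)⁻¹) * (1 / s) := by
    rw [eps_rpow k hε, ← hs]
    rw [mul_inv]
    ring
  rw [halg]
  exact hstep4.trans hstep3



variable {k : ℕ} {α : ℝ}

noncomputable def cL : ℝ := Real.exp (-17 / 2)

lemma cL_pos : 0 < cL := Real.exp_pos _

lemma inn_ubc {c : ℝ} (hc1 : -1 ≤ c) (hc2 : c < 1) :
    inn ((k:ℕ):ℝ) c ≤ c2up k * (1 - c) ^ (-((k:ℝ) + 1 / 2)) := by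
  have h := inn_ub' (k := k) (ε := 1 - c) (by linarith) (by linarith)
  rwa [sub_sub_cancel] at h

lemma inn_lbc {c : ℝ} (hc1 : -1 ≤ c) (hc2 : c < 1) :
    cL * (1 - c) ^ (-((k:ℝ) + 1 / 2)) ≤ inn ((k:ℕ):ℝ) c := by
  have h := inn_lb' (k := k) (ε := 1 - c) (by linarith) (by linarith)
  rwa [sub_sub_cancel] at h

lemma inn_nonneg (p c : ℝ) : 0 ≤ inn p c :=
  setIntegral_nonneg measurableSet_Ioi fun r hr => inner_nonneg p c (le_of_lt hr)

noncomputable def gfun (k : ℕ) (α : ℝ) : ℝ → ℝ := fun t =>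
  (1 - t ^ 2) ^ ((k:ℝ) / 2) * inn ((k:ℕ):ℝ) (t * α)

lemma sm_g : StronglyMeasurable (gfun k α) := by
  refine StronglyMeasurable.mul ?_ (sm_T _ α)
  exact (by fun_prop : Measurable fun t : ℝ => (1 - t ^ 2) ^ ((k:ℝ) / 2)).stronglyMeasurable

lemma g_nonneg {t : ℝ} (ht : t ∈ Set.Ioo (0:ℝ) 1) : 0 ≤ gfun k α t :=
  mul_nonneg (Real.rpow_nonneg (by nlinarith [ht.1, ht.2] : (0:ℝ) ≤ 1 - t ^ 2) _)
    (inn_nonneg _ _)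

lemma ta_mem (hα1 : -1 ≤ α) (hα2 : α < 1) {t : ℝ} (ht : t ∈ Set.Ioo (0:ℝ) 1) :
    -1 ≤ t * α ∧ t * α < 1 := by
  obtain ⟨ht0, ht1⟩ := ht
  constructor
  · nlinarith [mul_nonneg ht0.le (by linarith : (0:ℝ) ≤ α + 1)]
  · nlinarith [mul_pos ht0 (by linarith : (0:ℝ) < 1 - α)]

lemma half_rpow (s : ℝ) : ((1:ℝ) / 2) ^ s = (2:ℝ) ^ (-s) := by
  rw [one_div, Real.inv_rpow (by norm_num : (0:ℝ) ≤ 2), ← Real.rpow_neg (by norm_num : (0:ℝ) ≤ 2)]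

lemma rpow_cancel {x : ℝ} (hx : 0 < x) (s : ℝ) : x ^ (-s) * x ^ s = 1 := by
  rw [← Real.rpow_add hx]; simp

lemma eps_lb (hα1 : -1 ≤ α) (hα2 : α < 1) {t : ℝ} (ht : t ∈ Set.Ioo (0:ℝ) 1) :
    min 1 (1 - α) ≤ 1 - t * α := by
  rcases le_or_gt α 0 with h | h
  · have h2 : t * α ≤ 0 := mul_nonpos_iff.2 (Or.inl ⟨ht.1.le, h⟩)
    calc min 1 (1 - α) ≤ 1 := min_le_left _ _
      _ ≤ 1 - t * α := by linarith
  · have h2 : t * α ≤ α := by nlinarith [ht.2]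
    calc min 1 (1 - α) ≤ 1 - α := min_le_right _ _
      _ ≤ 1 - t * α := by linarith

lemma g_intOn (hα1 : -1 ≤ α) (hα2 : α < 1) :
    IntegrableOn (gfun k α) (Set.Ioo 0 1) volume := by
  set δ := min 1 (1 - α) with hδ
  have hδ0 : 0 < δ := lt_min one_pos (by linarith)
  refine Integrable.mono' (g := fun _ => c2up k * δ ^ (-((k:ℝ) + 1 / 2)))
    (integrableOn_const (ne_of_lt (by rw [Real.volume_Ioo]; exact ENNReal.ofReal_lt_top)))
    (sm_g.aestronglyMeasurable) ?_
  filter_upwards [ae_restrict_mem measurableSet_Ioo] with t ht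
  have hta := ta_mem hα1 hα2 ht
  have heps := eps_lb hα1 hα2 ht
  rw [Real.norm_eq_abs, abs_of_nonneg (g_nonneg ht)]
  unfold gfun
  calc (1 - t ^ 2) ^ ((k:ℝ) / 2) * inn ((k:ℕ):ℝ) (t * α)
      ≤ 1 * (c2up k * δ ^ (-((k:ℝ) + 1 / 2))) := by
        refine mul_le_mul ?_ ?_ (inn_nonneg _ _) zero_le_one
        · exact Real.rpow_le_one (by nlinarith [ht.1, ht.2]) (by nlinarith [ht.1, ht.2])
            (by positivity)
        · refine (inn_ubc hta.1 hta.2).trans ?_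
          exact mul_le_mul_of_nonneg_left
            (rpow_neg_anti hδ0 heps (by positivity)) (c2up_pos k).le
    _ = c2up k * δ ^ (-((k:ℝ) + 1 / 2)) := one_mul _



variable {k : ℕ} {α : ℝ}

lemma vol_Ioo_lt {a b : ℝ} : volume (Set.Ioo a b) < ⊤ := by
  rw [Real.volume_Ioo]; exact ENNReal.ofReal_lt_top

noncomputable def a1c (k : ℕ) : ℝ :=
  ((2:ℝ) ^ (-((k:ℝ) / 2)) * (cL * (2:ℝ) ^ (-((k:ℝ) + 1 / 2))) / 2) * (2:ℝ) ^ (-(((k:ℝ) - 1) / 2))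
noncomputable def a2c (k : ℕ) : ℝ := cL * (3:ℝ) ^ (-((k:ℝ) + 1 / 2))
noncomputable def b1c (k : ℕ) : ℝ := c2up k * (2:ℝ) ^ ((k:ℝ) + 1 / 2) * (2:ℝ) ^ (((k:ℝ) - 1) / 2)
noncomputable def b2c (k : ℕ) : ℝ :=
  c2up k * (2:ℝ) ^ ((k:ℝ) / 2) * (2 / ((k:ℝ) - 1)) + c2up k * (2:ℝ) ^ ((k:ℝ) / 2)

lemma a1c_pos (k : ℕ) : 0 < a1c k := by
  unfold a1c; have := cL_pos; positivity
lemma a2c_pos (k : ℕ) : 0 < a2c k := by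
  unfold a2c; have := cL_pos; positivity

-- Case α ≤ 1/2, lower bound
lemma T_lb1 (hk : 2 ≤ k) (hα1 : -1 ≤ α) (hα2 : α ≤ 1 / 2) :
    a1c k * (1 - α) ^ (-(((k:ℝ) - 1) / 2)) ≤ ∫ t in Set.Ioo (0:ℝ) 1, gfun k α t := by
  have hke : (2:ℝ) ≤ (k:ℝ) := by exact_mod_cast hk
  have hα2' : α < 1 := by linarith
  have hD0 : (0:ℝ) < 1 - α := by linarith
  have hDlb : (1:ℝ) / 2 ≤ 1 - α := by linarith
  set m := (2:ℝ) ^ (-((k:ℝ) / 2)) * (cL * (2:ℝ) ^ (-((k:ℝ) + 1 / 2))) with hm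
  have hsub : Set.Ioo (0:ℝ) (1 / 2) ⊆ Set.Ioo (0:ℝ) 1 :=
    Set.Ioo_subset_Ioo le_rfl (by norm_num)
  have h1 : ∀ t ∈ Set.Ioo (0:ℝ) (1 / 2), m ≤ gfun k α t := by
    intro t ht
    have ht' : t ∈ Set.Ioo (0:ℝ) 1 := hsub ht
    have hta := ta_mem hα1 hα2' ht'
    have hbase : (1:ℝ) / 2 ≤ 1 - t ^ 2 := by nlinarith [ht.1, ht.2]
    have f1 : (2:ℝ) ^ (-((k:ℝ) / 2)) ≤ (1 - t ^ 2) ^ ((k:ℝ) / 2) := by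
      rw [← half_rpow]
      exact Real.rpow_le_rpow (by norm_num) hbase (by positivity)
    have f2 : cL * (2:ℝ) ^ (-((k:ℝ) + 1 / 2)) ≤ inn ((k:ℕ):ℝ) (t * α) := by
      refine le_trans ?_ (inn_lbc hta.1 hta.2)
      refine mul_le_mul_of_nonneg_left ?_ cL_pos.le
      exact rpow_neg_anti (by linarith [hta.2]) (by linarith [hta.1]) (by positivity)
    exact mul_le_mul f1 f2 (by have := cL_pos; positivity)
      (Real.rpow_nonneg (by linarith) _)
  have h2 : m * (1 / 2) ≤ ∫ t in Set.Ioo (0:ℝ) (1 / 2), gfun k α t := by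
    have hc := setIntegral_mono_on (integrableOn_const vol_Ioo_lt.ne)
      ((g_intOn hα1 hα2').mono_set hsub) measurableSet_Ioo h1
    rw [setIntegral_const, measureReal_def, Real.volume_Ioo, ENNReal.toReal_ofReal (by norm_num)] at hc
    calc m * (1 / 2) = ((1:ℝ) / 2 - 0) • m := by rw [smul_eq_mul]; ring
      _ ≤ _ := hc
  have h3 : (∫ t in Set.Ioo (0:ℝ) (1 / 2), gfun k α t) ≤ ∫ t in Set.Ioo (0:ℝ) 1, gfun k α t := by
    refine setIntegral_mono_set (g_intOn hα1 hα2') ?_ hsub.eventuallyLE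
    filter_upwards [ae_restrict_mem measurableSet_Ioo] with t ht
    exact g_nonneg ht
  refine le_trans ?_ (h2.trans h3)
  -- a1c k * D^{-e2} ≤ m / 2
  have h4 : (1 - α) ^ (-(((k:ℝ) - 1) / 2)) ≤ (2:ℝ) ^ (((k:ℝ) - 1) / 2) := by
    have h5 := rpow_neg_anti (by norm_num : (0:ℝ) < 1 / 2) hDlb
      (by linarith : (0:ℝ) ≤ ((k:ℝ) - 1) / 2)
    rwa [half_rpow, neg_neg] at h5
  have hm0 : 0 ≤ m := by rw [hm]; have := cL_pos; positivity
  calc a1c k * (1 - α) ^ (-(((k:ℝ) - 1) / 2))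
      = (m / 2) * ((2:ℝ) ^ (-(((k:ℝ) - 1) / 2)) * (1 - α) ^ (-(((k:ℝ) - 1) / 2))) := by
        unfold a1c; rw [← hm]; ring
    _ ≤ (m / 2) * ((2:ℝ) ^ (-(((k:ℝ) - 1) / 2)) * (2:ℝ) ^ ((((k:ℝ) - 1) / 2))) := by
        refine mul_le_mul_of_nonneg_left (mul_le_mul_of_nonneg_left h4 ?_) (by positivity)
        positivity
    _ = m * (1 / 2) := by rw [rpow_cancel (by norm_num : (0:ℝ) < 2)]; ring




variable {k : ℕ} {α : ℝ}

lemma Dalg {D : ℝ} (hD : 0 < D) (k : ℕ) :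
    D ^ ((k:ℝ) / 2) * D ^ (-((k:ℝ) + 1 / 2)) * D = D ^ (-(((k:ℝ) - 1) / 2)) := by
  calc D ^ ((k:ℝ) / 2) * D ^ (-((k:ℝ) + 1 / 2)) * D
      = D ^ ((k:ℝ) / 2) * D ^ (-((k:ℝ) + 1 / 2)) * D ^ (1:ℝ) := by rw [Real.rpow_one]
    _ = D ^ ((k:ℝ) / 2 + -((k:ℝ) + 1 / 2) + 1) := by
        rw [← Real.rpow_add hD, ← Real.rpow_add hD]
    _ = D ^ (-(((k:ℝ) - 1) / 2)) := by congr 1; ring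

-- Case α ≤ 1/2, upper bound
lemma T_ub1 (hk : 2 ≤ k) (hα1 : -1 ≤ α) (hα2 : α ≤ 1 / 2) :
    (∫ t in Set.Ioo (0:ℝ) 1, gfun k α t) ≤ b1c k * (1 - α) ^ (-(((k:ℝ) - 1) / 2)) := by
  have hke : (2:ℝ) ≤ (k:ℝ) := by exact_mod_cast hk
  have hα2' : α < 1 := by linarith
  have hD0 : (0:ℝ) < 1 - α := by linarith
  have hDub : 1 - α ≤ 2 := by linarith
  set M := c2up k * (2:ℝ) ^ ((k:ℝ) + 1 / 2) with hM
  have h1 : ∀ t ∈ Set.Ioo (0:ℝ) 1, gfun k α t ≤ M := by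
    intro t ht
    have hta := ta_mem hα1 hα2' ht
    have heps : (1:ℝ) / 2 ≤ 1 - t * α := by
      refine le_trans ?_ (eps_lb hα1 hα2' ht)
      exact le_min (by norm_num) (by linarith)
    calc gfun k α t ≤ 1 * (c2up k * ((1:ℝ) / 2) ^ (-((k:ℝ) + 1 / 2))) := by
          unfold gfun
          refine mul_le_mul ?_ ?_ (inn_nonneg _ _) zero_le_one
          · exact Real.rpow_le_one (by nlinarith [ht.1, ht.2]) (by nlinarith [ht.1, ht.2])
              (by positivity)
          · refine (inn_ubc hta.1 hta.2).trans ?_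
            exact mul_le_mul_of_nonneg_left
              (rpow_neg_anti (by norm_num) heps (by positivity)) (c2up_pos k).le
      _ = M := by rw [half_rpow, neg_neg, hM, one_mul]
  have h2 : (∫ t in Set.Ioo (0:ℝ) 1, gfun k α t) ≤ M := by
    have hc := setIntegral_mono_on (g_intOn hα1 hα2')
      (integrableOn_const vol_Ioo_lt.ne) measurableSet_Ioo h1
    rw [setIntegral_const, measureReal_def, Real.volume_Ioo, ENNReal.toReal_ofReal (by norm_num)] at hc
    calc (∫ t in Set.Ioo (0:ℝ) 1, gfun k α t) ≤ ((1:ℝ) - 0) • M := hc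
      _ = M := by rw [smul_eq_mul]; ring
  refine h2.trans ?_
  have h4 : (2:ℝ) ^ (-(((k:ℝ) - 1) / 2)) ≤ (1 - α) ^ (-(((k:ℝ) - 1) / 2)) :=
    rpow_neg_anti hD0 hDub (by linarith)
  calc M = M * ((2:ℝ) ^ (((k:ℝ) - 1) / 2) * (2:ℝ) ^ (-(((k:ℝ) - 1) / 2))) := by
        rw [mul_comm ((2:ℝ) ^ (((k:ℝ) - 1) / 2)), rpow_cancel (by norm_num : (0:ℝ) < 2)]; ring
    _ ≤ M * ((2:ℝ) ^ (((k:ℝ) - 1) / 2) * (1 - α) ^ (-(((k:ℝ) - 1) / 2))) := by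
        refine mul_le_mul_of_nonneg_left (mul_le_mul_of_nonneg_left h4 (by positivity)) ?_
        rw [hM]; exact mul_nonneg (c2up_pos k).le (by positivity)
    _ = b1c k * (1 - α) ^ (-(((k:ℝ) - 1) / 2)) := by rw [hM, b1c]; ring

-- Case α > 1/2, lower bound
lemma T_lb2 (hk : 2 ≤ k) (hα2 : 1 / 2 < α) (hα3 : α < 1) :
    a2c k * (1 - α) ^ (-(((k:ℝ) - 1) / 2)) ≤ ∫ t in Set.Ioo (0:ℝ) 1, gfun k α t := by
  have hke : (2:ℝ) ≤ (k:ℝ) := by exact_mod_cast hk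
  have hα1 : -1 ≤ α := by linarith
  set D := 1 - α with hDd
  have hD0 : 0 < D := by rw [hDd]; linarith
  have hDh : D < 1 / 2 := by rw [hDd]; linarith
  have hsub : Set.Ioo (1 - 2 * D) (1 - D) ⊆ Set.Ioo (0:ℝ) 1 := by
    intro x hx; exact ⟨by linarith [hx.1], by linarith [hx.2]⟩
  set m2 := D ^ ((k:ℝ) / 2) * (cL * (3 * D) ^ (-((k:ℝ) + 1 / 2))) with hm2
  have h1 : ∀ t ∈ Set.Ioo (1 - 2 * D) (1 - D), m2 ≤ gfun k α t := by
    intro t ht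
    have ht' : t ∈ Set.Ioo (0:ℝ) 1 := hsub ht
    have hta := ta_mem hα1 hα3 ht'
    have f1 : D ^ ((k:ℝ) / 2) ≤ (1 - t ^ 2) ^ ((k:ℝ) / 2) := by
      refine Real.rpow_le_rpow hD0.le ?_ (by positivity)
      nlinarith [ht.2, ht'.1, ht'.2]
    have hta3 : 1 - t * α ≤ 3 * D := by
      have h5 : t * D ≤ D := by nlinarith [ht'.2, hD0]
      nlinarith [ht.1]
    have f2 : cL * (3 * D) ^ (-((k:ℝ) + 1 / 2)) ≤ inn ((k:ℕ):ℝ) (t * α) := by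
      refine le_trans ?_ (inn_lbc hta.1 hta.2)
      exact mul_le_mul_of_nonneg_left
        (rpow_neg_anti (by linarith [hta.2]) hta3 (by positivity)) cL_pos.le
    exact mul_le_mul f1 f2 (mul_nonneg cL_pos.le (Real.rpow_nonneg (by linarith) _))
      (Real.rpow_nonneg (by nlinarith [ht'.1, ht'.2]) _)
  have h2 : m2 * D ≤ ∫ t in Set.Ioo (1 - 2 * D) (1 - D), gfun k α t := by
    have hc := setIntegral_mono_on (integrableOn_const vol_Ioo_lt.ne)
      ((g_intOn hα1 hα3).mono_set hsub) measurableSet_Ioo h1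
    rw [setIntegral_const, measureReal_def, Real.volume_Ioo, ENNReal.toReal_ofReal (by linarith)] at hc
    calc m2 * D = (1 - D - (1 - 2 * D)) • m2 := by rw [smul_eq_mul]; ring
      _ ≤ _ := hc
  have h3 : (∫ t in Set.Ioo (1 - 2 * D) (1 - D), gfun k α t) ≤
      ∫ t in Set.Ioo (0:ℝ) 1, gfun k α t := by
    refine setIntegral_mono_set (g_intOn hα1 hα3) ?_ hsub.eventuallyLE
    filter_upwards [ae_restrict_mem measurableSet_Ioo] with t ht
    exact g_nonneg ht
  refine le_trans (le_of_eq ?_) (h2.trans h3)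
  have hmul : (3 * D) ^ (-((k:ℝ) + 1 / 2)) =
      (3:ℝ) ^ (-((k:ℝ) + 1 / 2)) * D ^ (-((k:ℝ) + 1 / 2)) :=
    Real.mul_rpow (by norm_num) hD0.le
  calc a2c k * D ^ (-(((k:ℝ) - 1) / 2))
      = cL * (3:ℝ) ^ (-((k:ℝ) + 1 / 2)) *
        (D ^ ((k:ℝ) / 2) * D ^ (-((k:ℝ) + 1 / 2)) * D) := by rw [a2c, Dalg hD0]
    _ = m2 * D := by rw [hm2, hmul]; ring



variable {k : ℕ} {α : ℝ}

-- Case α > 1/2, upper bound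
set_option maxHeartbeats 2000000 in
lemma T_ub2 (hk : 2 ≤ k) (hα2 : 1 / 2 < α) (hα3 : α < 1) :
    (∫ t in Set.Ioo (0:ℝ) 1, gfun k α t) ≤ b2c k * (1 - α) ^ (-(((k:ℝ) - 1) / 2)) := by
  have hke : (2:ℝ) ≤ (k:ℝ) := by exact_mod_cast hk
  have hα1 : -1 ≤ α := by linarith
  set D := 1 - α with hDd
  have hD0 : 0 < D := by rw [hDd]; linarith
  have hDh : D < 1 / 2 := by rw [hDd]; linarith
  set q := ((k:ℝ) + 1) / 2 with hq
  set CC := c2up k * (2:ℝ) ^ ((k:ℝ) / 2) with hCC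
  have hCC0 : 0 ≤ CC := by rw [hCC]; exact mul_nonneg (c2up_pos k).le (by positivity)
  have hsub1 : Set.Ioc (0:ℝ) (1 - D) ⊆ Set.Ioo (0:ℝ) 1 :=
    fun x hx => ⟨hx.1, lt_of_le_of_lt hx.2 (by linarith)⟩
  have hsub2 : Set.Ioo (1 - D) 1 ⊆ Set.Ioo (0:ℝ) 1 :=
    fun x hx => ⟨by linarith [hx.1], hx.2⟩
  have hint1 : IntegrableOn (gfun k α) (Set.Ioc 0 (1 - D)) volume :=
    (g_intOn hα1 hα3).mono_set hsub1
  have hint2 : IntegrableOn (gfun k α) (Set.Ioo (1 - D) 1) volume :=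
    (g_intOn hα1 hα3).mono_set hsub2
  have hdisj : Disjoint (Set.Ioc (0:ℝ) (1 - D)) (Set.Ioo (1 - D) 1) := by
    rw [Set.disjoint_left]
    rintro x hx hx2
    exact absurd hx.2 (not_le.2 hx2.1)
  have hsplit : (∫ t in Set.Ioo (0:ℝ) 1, gfun k α t) =
      (∫ t in Set.Ioc (0:ℝ) (1 - D), gfun k α t) + ∫ t in Set.Ioo (1 - D) 1, gfun k α t := by
    rw [← Set.Ioc_union_Ioo_eq_Ioo (by linarith : (0:ℝ) ≤ 1 - D) (by linarith : 1 - D < 1)]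
    exact setIntegral_union hdisj measurableSet_Ioo hint1 hint2
  -- piece 2
  have hp2 : (∫ t in Set.Ioo (1 - D) 1, gfun k α t) ≤ CC * D ^ (-(((k:ℝ) - 1) / 2)) := by
    set M2 := (2 * D) ^ ((k:ℝ) / 2) * (c2up k * D ^ (-((k:ℝ) + 1 / 2))) with hM2
    have h1 : ∀ t ∈ Set.Ioo (1 - D) 1, gfun k α t ≤ M2 := by
      intro t ht
      have ht' : t ∈ Set.Ioo (0:ℝ) 1 := hsub2 ht
      have hta := ta_mem hα1 hα3 ht'
      have f1 : (1 - t ^ 2) ^ ((k:ℝ) / 2) ≤ (2 * D) ^ ((k:ℝ) / 2) := by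
        refine Real.rpow_le_rpow (by nlinarith [ht'.1, ht'.2]) ?_ (by positivity)
        nlinarith [ht.1, ht.2, ht'.1]
      have f2 : inn ((k:ℕ):ℝ) (t * α) ≤ c2up k * D ^ (-((k:ℝ) + 1 / 2)) := by
        refine (inn_ubc hta.1 hta.2).trans ?_
        refine mul_le_mul_of_nonneg_left ?_ (c2up_pos k).le
        refine rpow_neg_anti hD0 ?_ (by positivity)
        rw [hDd]; nlinarith [ht'.2]
      exact mul_le_mul f1 f2 (inn_nonneg _ _) (Real.rpow_nonneg (by positivity) _)
    have h2 := setIntegral_mono_on hint2 (integrableOn_const vol_Ioo_lt.ne)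
      measurableSet_Ioo h1
    rw [setIntegral_const, measureReal_def, Real.volume_Ioo, ENNReal.toReal_ofReal (by linarith)] at h2
    refine h2.trans (le_of_eq ?_)
    have hmul : (2 * D) ^ ((k:ℝ) / 2) = (2:ℝ) ^ ((k:ℝ) / 2) * D ^ ((k:ℝ) / 2) :=
      Real.mul_rpow (by norm_num) hD0.le
    calc (1 - (1 - D)) • M2 = CC * (D ^ ((k:ℝ) / 2) * D ^ (-((k:ℝ) + 1 / 2)) * D) := by
          rw [smul_eq_mul, hM2, hmul, hCC]; ring
      _ = CC * D ^ (-(((k:ℝ) - 1) / 2)) := by rw [Dalg hD0]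
  -- piece 1
  have hp1 : (∫ t in Set.Ioc (0:ℝ) (1 - D), gfun k α t) ≤
      CC * (2 / ((k:ℝ) - 1)) * D ^ (-(((k:ℝ) - 1) / 2)) := by
    have h1 : ∀ t ∈ Set.Ioc (0:ℝ) (1 - D), gfun k α t ≤ CC * (1 - t) ^ (-q) := by
      intro t ht
      have ht1 : 0 < t := ht.1
      have ht2 : t ≤ 1 - D := ht.2
      have h1t : 0 < 1 - t := by linarith
      have ht' : t ∈ Set.Ioo (0:ℝ) 1 := hsub1 ht
      have hta := ta_mem hα1 hα3 ht'
      have f1 : (1 - t ^ 2) ^ ((k:ℝ) / 2) ≤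
          (2:ℝ) ^ ((k:ℝ) / 2) * (1 - t) ^ ((k:ℝ) / 2) := by
        rw [← Real.mul_rpow (by norm_num) h1t.le]
        refine Real.rpow_le_rpow (by nlinarith) (by nlinarith) (by positivity)
      have f2 : inn ((k:ℕ):ℝ) (t * α) ≤ c2up k * (1 - t) ^ (-((k:ℝ) + 1 / 2)) := by
        refine (inn_ubc hta.1 hta.2).trans ?_
        refine mul_le_mul_of_nonneg_left ?_ (c2up_pos k).le
        refine rpow_neg_anti h1t ?_ (by positivity)
        nlinarith [ht'.1]
      calc gfun k α t ≤ ((2:ℝ) ^ ((k:ℝ) / 2) * (1 - t) ^ ((k:ℝ) / 2)) *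
            (c2up k * (1 - t) ^ (-((k:ℝ) + 1 / 2))) := by
            unfold gfun
            exact mul_le_mul f1 f2 (inn_nonneg _ _) (by positivity)
        _ = CC * ((1 - t) ^ ((k:ℝ) / 2) * (1 - t) ^ (-((k:ℝ) + 1 / 2))) := by
            rw [hCC]; ring
        _ = CC * (1 - t) ^ (-q) := by
            rw [← Real.rpow_add h1t]; congr 1; rw [hq]; ring
    have hcont : ContinuousOn (fun t : ℝ => CC * (1 - t) ^ (-q)) (Set.Icc 0 (1 - D)) := by
      refine ContinuousOn.mul continuousOn_const ?_
      refine ContinuousOn.rpow_const (by fun_prop) ?_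
      intro x hx
      left
      have : x ≤ 1 - D := hx.2
      intro h0
      have : (1:ℝ) - x = 0 := h0
      linarith
    have hintRHS : IntegrableOn (fun t : ℝ => CC * (1 - t) ^ (-q)) (Set.Ioc 0 (1 - D)) volume :=
      (hcont.integrableOn_compact isCompact_Icc).mono_set Set.Ioc_subset_Icc_self
    have h2 := setIntegral_mono_on hint1 hintRHS measurableSet_Ioc h1
    -- compute the RHS integral
    have hval : (∫ t in Set.Ioc (0:ℝ) (1 - D), (1 - t) ^ (-q)) =
        (1 - D ^ (-q + 1)) / (-q + 1) := by
      rw [← intervalIntegral.integral_of_le (by linarith : (0:ℝ) ≤ 1 - D)]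
      rw [intervalIntegral.integral_comp_sub_left (fun x : ℝ => x ^ (-q)) 1]
      rw [sub_sub_cancel, sub_zero]
      rw [integral_rpow (Or.inr ⟨by rw [hq]; intro h; nlinarith [hke],
        by intro hmem; rcases Set.mem_uIcc.1 hmem with ⟨h1', h2'⟩ | ⟨h1', h2'⟩ <;> linarith⟩)]
      rw [Real.one_rpow]
    have hIv : (∫ t in Set.Ioc (0:ℝ) (1 - D), CC * (1 - t) ^ (-q)) =
        CC * ((1 - D ^ (-q + 1)) / (-q + 1)) := by
      rw [integral_const_mul, hval]
    have hqm1 : -q + 1 = -(((k:ℝ) - 1) / 2) := by rw [hq]; ring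
    have he2 : 0 < ((k:ℝ) - 1) / 2 := by linarith
    have hEnn : (0:ℝ) ≤ D ^ (-(((k:ℝ) - 1) / 2)) := Real.rpow_nonneg hD0.le _
    have hbound : (1 - D ^ (-q + 1)) / (-q + 1) ≤
        D ^ (-(((k:ℝ) - 1) / 2)) * (2 / ((k:ℝ) - 1)) := by
      rw [hqm1]
      set E := D ^ (-(((k:ℝ) - 1) / 2)) with hE
      have step : (1 - E) / (-(((k:ℝ) - 1) / 2)) = (E - 1) / (((k:ℝ) - 1) / 2) := by
        rw [div_neg, neg_div', neg_sub]
      rw [step]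
      rw [div_le_iff₀ (by linarith : (0:ℝ) < ((k:ℝ) - 1) / 2)]
      have hk1 : (0:ℝ) < (k:ℝ) - 1 := by linarith
      have : E * (2 / ((k:ℝ) - 1)) * (((k:ℝ) - 1) / 2) = E := by field_simp
      rw [this]
      linarith
    refine h2.trans ?_
    rw [hIv]
    calc CC * ((1 - D ^ (-q + 1)) / (-q + 1)) ≤
        CC * (D ^ (-(((k:ℝ) - 1) / 2)) * (2 / ((k:ℝ) - 1))) :=
          mul_le_mul_of_nonneg_left hbound hCC0
      _ = CC * (2 / ((k:ℝ) - 1)) * D ^ (-(((k:ℝ) - 1) / 2)) := by ring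
  -- combine
  rw [hsplit]
  calc (∫ t in Set.Ioc (0:ℝ) (1 - D), gfun k α t) + ∫ t in Set.Ioo (1 - D) 1, gfun k α t
      ≤ CC * (2 / ((k:ℝ) - 1)) * D ^ (-(((k:ℝ) - 1) / 2)) +
        CC * D ^ (-(((k:ℝ) - 1) / 2)) := add_le_add hp1 hp2
    _ = b2c k * D ^ (-(((k:ℝ) - 1) / 2)) := by rw [b2c, hCC]; ring



variable {k : ℕ} {α : ℝ}

lemma T_bounds (hk : 2 ≤ k) (hα1 : -1 ≤ α) (hα3 : α < 1) :
    min (a1c k) (a2c k) * (1 - α) ^ (-(((k:ℝ) - 1) / 2)) ≤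
      (∫ t in Set.Ioo (0:ℝ) 1, gfun k α t) ∧
    (∫ t in Set.Ioo (0:ℝ) 1, gfun k α t) ≤
      max (b1c k) (b2c k) * (1 - α) ^ (-(((k:ℝ) - 1) / 2)) := by
  have hpow : 0 ≤ (1 - α) ^ (-(((k:ℝ) - 1) / 2)) := Real.rpow_nonneg (by linarith) _
  rcases le_or_gt α (1 / 2) with h | h
  · exact ⟨le_trans (mul_le_mul_of_nonneg_right (min_le_left _ _) hpow) (T_lb1 hk hα1 h),
      (T_ub1 hk hα1 h).trans (mul_le_mul_of_nonneg_right (le_max_left _ _) hpow)⟩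
  · exact ⟨le_trans (mul_le_mul_of_nonneg_right (min_le_right _ _) hpow) (T_lb2 hk h hα3),
      (T_ub2 hk h hα3).trans (mul_le_mul_of_nonneg_right (le_max_right _ _) hpow)⟩

lemma psi_eq (n : ℕ) (hn : 2 ≤ n) (α : ℝ) :
    psi n α = (1 / (2 ^ ((n:ℝ) - 2) * Real.Gamma ((n:ℝ) / 2) ^ 2)) *
      ∫ t in Set.Ioo (0:ℝ) 1, gfun (n - 2) α t := by
  have hcast : (((n - 2 : ℕ)):ℝ) = ((n:ℝ) - 2) := by
    rw [Nat.cast_sub hn]; norm_num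
  simp only [psi, gfun, inn, hcast, mul_assoc]



end S7

/-- For `n ≥ 4`, `ψ_n(α) ∼ (1-α)^{-(n-3)/2}` with `n`-dependent constants, on `[-1,1)`. -/
theorem statement7 (n : ℕ) (hn : 4 ≤ n) :
    ∃ a b : ℝ, 0 < a ∧ a ≤ b ∧ ∀ α ∈ Set.Ico (-1 : ℝ) 1,
      a * (1 - α) ^ (-((n : ℝ) - 3) / 2) ≤ psi n α ∧
        psi n α ≤ b * (1 - α) ^ (-((n : ℝ) - 3) / 2) := by
  classical
  set k := n - 2 with hkdef
  have hk : 2 ≤ k := by omega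
  have hkcast : ((k:ℕ):ℝ) = (n:ℝ) - 2 := by
    rw [hkdef, Nat.cast_sub (by omega : 2 ≤ n)]; norm_num
  set C := (1 / (2 ^ ((n : ℝ) - 2) * Real.Gamma ((n : ℝ) / 2) ^ 2)) with hC
  have hC0 : 0 < C := by
    rw [hC]
    have h1 : 0 < (2:ℝ) ^ ((n:ℝ) - 2) := Real.rpow_pos_of_pos two_pos _
    have h2 : 0 < Real.Gamma ((n:ℝ) / 2) := by
      refine Real.Gamma_pos_of_pos ?_
      have : (4:ℝ) ≤ (n:ℝ) := by exact_mod_cast hn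
      linarith
    positivity
  refine ⟨C * min (S7.a1c k) (S7.a2c k),
    max (C * max (S7.b1c k) (S7.b2c k)) (C * min (S7.a1c k) (S7.a2c k)),
    mul_pos hC0 (lt_min (S7.a1c_pos k) (S7.a2c_pos k)), le_max_right _ _, ?_⟩
  intro α hα
  obtain ⟨hα1, hα3⟩ := hα
  have hT := S7.T_bounds hk hα1 hα3
  have hψ : psi n α = C * ∫ t in Set.Ioo (0:ℝ) 1, S7.gfun k α t := by
    rw [S7.psi_eq n (by omega) α, ← hkdef, hC]
  have hee : (-((n:ℝ) - 3) / 2) = (-(((k:ℝ) - 1) / 2)) := by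
    rw [hkcast]; ring
  have hpow : 0 ≤ (1 - α) ^ (-(((k:ℝ) - 1) / 2)) := Real.rpow_nonneg (by linarith) _
  constructor
  · rw [hψ, hee]
    calc C * min (S7.a1c k) (S7.a2c k) * (1 - α) ^ (-(((k:ℝ) - 1) / 2))
        = C * (min (S7.a1c k) (S7.a2c k) * (1 - α) ^ (-(((k:ℝ) - 1) / 2))) := by ring
      _ ≤ C * ∫ t in Set.Ioo (0:ℝ) 1, S7.gfun k α t :=
          mul_le_mul_of_nonneg_left hT.1 hC0.le
  · rw [hψ, hee]
    calc C * ∫ t in Set.Ioo (0:ℝ) 1, S7.gfun k α t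
        ≤ C * (max (S7.b1c k) (S7.b2c k) * (1 - α) ^ (-(((k:ℝ) - 1) / 2))) :=
          mul_le_mul_of_nonneg_left hT.2 hC0.le
      _ = (C * max (S7.b1c k) (S7.b2c k)) * (1 - α) ^ (-(((k:ℝ) - 1) / 2)) := by ring
      _ ≤ max (C * max (S7.b1c k) (S7.b2c k)) (C * min (S7.a1c k) (S7.a2c k)) *
            (1 - α) ^ (-(((k:ℝ) - 1) / 2)) :=
          mul_le_mul_of_nonneg_right (le_max_left _ _) hpow
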